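/- Let ℓ ∈ ℕ, t > 0, and let γ_{−1}, γ_0, γ_1 : [0,t] → ℓ×ℓ complex matrices be measurable. Let {a^{(N)}_{j,k} : j,k ∈ ℤ, |j−k| ≤ 1, N ∈ ℕ₀} be ℓ×ℓ complex matrices with norms bounded by a uniform constant, such that for each i ∈ {−1,0,1}, lim_{n/N→s} a^{(N)}_{n+i,n} = γ_i(s) for almost every s ∈ [0,t]. Assume that for almost every s ∈ [0,t] there is a compactly supported finite positive Borel measure ν^{(s)} on ℂ such that for every k ∈ ℕ₀, (1/n)·Tr((J_n(γ_{−1}(s), γ_0(s), γ_1(s)))^k) → ∫_ℂ z^k dν^{(s)}(z) as n → ∞. Then for every k ∈ ℕ₀ and all sequences n_j, N_j → ∞ with n_j/N_j → t, (1/n_j)·Tr((J_{n_j}^{(N_j)})^k) → (1/t) ∫_0^t (∫_ℂ z^k dν^{(s)}(z)) ds. -/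

import Mathlib

open Filter MeasureTheory

noncomputable section

/-- The `nℓ × nℓ` truncation of the two-sided block-tridiagonal operator with block
entries `a j k` (`|j - k| ≤ 1`, zero otherwise). -/
def Jn (ℓ n : ℕ) (a : ℤ → ℤ → Matrix (Fin ℓ) (Fin ℓ) ℂ) :
    Matrix (Fin n × Fin ℓ) (Fin n × Fin ℓ) ℂ :=
  Matrix.of fun pq rs =>
    if |((pq.1 : ℕ) : ℤ) - ((rs.1 : ℕ) : ℤ)| ≤ 1 then
      a ((pq.1 : ℕ) : ℤ) ((rs.1 : ℕ) : ℤ) pq.2 rs.2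
    else 0

/-- The block entries of the block Toeplitz tridiagonal matrix with blocks
`a_{j-1,j} = γ₋₁`, `a_{j,j} = γ₀`, `a_{j+1,j} = γ₁`. -/
def toeplitzBlocks (ℓ : ℕ) (γm γ0 γ1 : Matrix (Fin ℓ) (Fin ℓ) ℂ) :
    ℤ → ℤ → Matrix (Fin ℓ) (Fin ℓ) ℂ :=
  fun j k => if j + 1 = k then γm else if j = k then γ0 else if j = k + 1 then γ1 else 0

/-- Path-sum semantics for a banded infinite block matrix. -/
def Phi (ℓ : ℕ) : ℕ → (ℤ → ℤ → Matrix (Fin ℓ) (Fin ℓ) ℂ) → ℤ → ℤ → Matrix (Fin ℓ) (Fin ℓ) ℂ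
  | 0, _, p, q => if p = q then 1 else 0
  | m+1, e, p, q => ∑ d ∈ ({-1,0,1} : Finset ℤ), e p (p+d) * Phi ℓ m e (p+d) q

/-- untruncated entry function -/
def EntA (ℓ : ℕ) (b : ℤ → ℤ → Matrix (Fin ℓ) (Fin ℓ) ℂ) : ℤ → ℤ → Matrix (Fin ℓ) (Fin ℓ) ℂ :=
  fun p q => if |p - q| ≤ 1 then b p q else 0

/-- truncated entry function -/
def EntT (ℓ : ℕ) (n : ℕ) (b : ℤ → ℤ → Matrix (Fin ℓ) (Fin ℓ) ℂ) :
    ℤ → ℤ → Matrix (Fin ℓ) (Fin ℓ) ℂ :=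
  fun p q => if 0 ≤ p ∧ p < n ∧ 0 ≤ q ∧ q < n ∧ |p - q| ≤ 1 then b p q else 0

variable {ℓ : ℕ}

theorem Phi_locality (m : ℕ) (e e' : ℤ → ℤ → Matrix (Fin ℓ) (Fin ℓ) ℂ) (p p' : ℤ)
    (h : ∀ c c' : ℤ, |c| ≤ m → |c'| ≤ m → e (p+c) (p+c') = e' (p'+c) (p'+c')) (q : ℤ) :
    Phi ℓ m e p q = Phi ℓ m e' p' (p' + (q - p)) := by
  induction m generalizing p p' q with
  | zero =>
    simp only [Phi]
    by_cases hpq : p = q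
    · simp [hpq]
    · rw [if_neg hpq, if_neg (by omega)]
  | succ m ih =>
    simp only [Phi]
    refine Finset.sum_congr rfl fun d hd => ?_
    have hd1 : -1 ≤ d ∧ d ≤ 1 := by fin_cases hd <;> norm_num
    have hm1 : ((m:ℤ)+1 : ℤ) = ((m+1 : ℕ) : ℤ) := by push_cast; ring
    have h1 : e p (p+d) = e' p' (p'+d) := by
      have := h 0 d (by rw [abs_le]; push_cast; omega) (by rw [abs_le]; push_cast; omega)
      simpa using this
    have h2 : Phi ℓ m e (p+d) q = Phi ℓ m e' (p'+d) ((p'+d) + (q - (p+d))) := by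
      refine ih (p+d) (p'+d) (fun c c' hc hc' => ?_) q
      rw [abs_le] at hc hc'
      have := h (d+c) (d+c') (by rw [abs_le]; push_cast; omega) (by rw [abs_le]; push_cast; omega)
      convert this using 2 <;> ring
    rw [h1, h2]
    congr 1
    ring_nf

theorem Phi_bound (C : ℝ) (hC : 1 ≤ C) (m : ℕ)
    (e : ℤ → ℤ → Matrix (Fin ℓ) (Fin ℓ) ℂ)
    (he : ∀ p q x y, ‖e p q x y‖ ≤ C) (p q : ℤ) (x y : Fin ℓ) :
    ‖Phi ℓ m e p q x y‖ ≤ (3 * ℓ * C) ^ m := by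
  induction m generalizing p q x y with
  | zero =>
    simp only [Phi]
    by_cases hpq : p = q <;> simp [hpq, Matrix.one_apply] <;> split <;> simp
  | succ m ih =>
    simp only [Phi, Matrix.sum_apply, Matrix.mul_apply]
    calc ‖∑ d ∈ ({-1,0,1} : Finset ℤ), ∑ z, e p (p+d) x z * Phi ℓ m e (p+d) q z y‖
        ≤ ∑ d ∈ ({-1,0,1} : Finset ℤ), ∑ z : Fin ℓ,
            ‖e p (p+d) x z * Phi ℓ m e (p+d) q z y‖ := by
          refine (norm_sum_le _ _).trans ?_
          exact Finset.sum_le_sum fun d _ => norm_sum_le _ _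
      _ ≤ ∑ d ∈ ({-1,0,1} : Finset ℤ), ∑ z : Fin ℓ, C * (3 * ℓ * C) ^ m := by
          refine Finset.sum_le_sum fun d _ => Finset.sum_le_sum fun z _ => ?_
          rw [norm_mul]
          exact mul_le_mul (he _ _ _ _) (ih _ _ _ _) (by positivity) (by linarith)
          
      _ = 3 * ℓ * (C * (3 * ℓ * C) ^ m) := by
          rw [Finset.sum_const, Finset.sum_const]
          simp only [Finset.card_univ, Fintype.card_fin, nsmul_eq_mul]
          norm_num
          ring
      _ = (3 * ℓ * C) ^ (m+1) := by ring

theorem Phi_tendsto (m : ℕ) (E : ℕ → ℤ → ℤ → Matrix (Fin ℓ) (Fin ℓ) ℂ)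
    (e : ℤ → ℤ → Matrix (Fin ℓ) (Fin ℓ) ℂ) (p q : ℤ)
    (h : ∀ c c' : ℤ, |c| ≤ m → |c'| ≤ m →
      Tendsto (fun j => E j (p+c) (p+c')) atTop (nhds (e (p+c) (p+c')))) :
    Tendsto (fun j => Phi ℓ m (E j) p q) atTop (nhds (Phi ℓ m e p q)) := by
  induction m generalizing p q with
  | zero => simp only [Phi]; exact tendsto_const_nhds
  | succ m ih =>
    simp only [Phi]
    refine tendsto_finset_sum _ fun d hd => ?_
    have hd1 : -1 ≤ d ∧ d ≤ 1 := by fin_cases hd <;> norm_num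
    refine Tendsto.mul ?_ ?_
    · have := h 0 d (by rw [abs_le]; push_cast; omega) (by rw [abs_le]; push_cast; omega)
      simpa using this
    · refine ih (p+d) q (fun c c' hc hc' => ?_)
      rw [abs_le] at hc hc'
      have := h (d+c) (d+c') (by rw [abs_le]; push_cast; omega) (by rw [abs_le]; push_cast; omega)
      convert this using 3 <;> ring

theorem Phi_measurable (m : ℕ) (E : ℝ → ℤ → ℤ → Matrix (Fin ℓ) (Fin ℓ) ℂ)
    (h : ∀ p q x y, Measurable fun s => E s p q x y) (p q : ℤ) (x y : Fin ℓ) :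
    Measurable fun s => Phi ℓ m (E s) p q x y := by
  induction m generalizing p q x y with
  | zero =>
    simp only [Phi]
    by_cases hpq : p = q <;> simp [hpq]
  | succ m ih =>
    simp only [Phi, Matrix.sum_apply, Matrix.mul_apply]
    refine Finset.measurable_sum _ fun d _ => Finset.measurable_sum _ fun z _ => ?_
    exact (h p (p+d) x z).mul (ih (p+d) q z y)

theorem bridge (b : ℤ → ℤ → Matrix (Fin ℓ) (Fin ℓ) ℂ) (n : ℕ) (m : ℕ)
    (p q : Fin n) (x y : Fin ℓ) :
    ((Jn ℓ n b) ^ m) (p, x) (q, y) = Phi ℓ m (EntT ℓ n b) ↑p ↑q x y := by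
  induction m generalizing p x with
  | zero =>
    simp only [pow_zero, Phi, Matrix.one_apply]
    by_cases hpq : p = q
    · subst hpq
      rw [if_pos rfl]
      by_cases hxy : x = y <;> simp [hxy, Matrix.one_apply]
    · rw [if_neg (by simp [Prod.ext_iff, hpq]), if_neg (by simpa [Fin.val_injective.eq_iff] using hpq),
        Matrix.zero_apply]
  | succ m ih =>
    rw [pow_succ']
    set e := EntT ℓ n b with he
    set H : ℤ → ℂ := fun jj => ∑ z : Fin ℓ, e ↑p jj x z * Phi ℓ m e jj ↑q z y with hH
    have hmem : ∀ j : ℤ, (∃ r : Fin n, (↑↑r : ℤ) = j) ↔ 0 ≤ j ∧ j < n := by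
      intro j
      constructor
      · rintro ⟨r, rfl⟩; exact ⟨by positivity, by exact_mod_cast r.2⟩
      · rintro ⟨h0, h1⟩
        exact ⟨⟨j.toNat, by omega⟩, by simp; omega⟩
    have hzero1 : ∀ j : ℤ, ¬(0 ≤ j ∧ j < n) → H j = 0 := by
      intro j hj
      refine Finset.sum_eq_zero fun z _ => ?_
      have : e ↑p j = 0 := by rw [he]; simp only [EntT]; rw [if_neg (by tauto)]
      simp [this]
    have hzero2 : ∀ j : ℤ, ¬(|(↑↑p : ℤ) - j| ≤ 1) → H j = 0 := by
      intro j hj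
      refine Finset.sum_eq_zero fun z _ => ?_
      have : e ↑p j = 0 := by rw [he]; simp only [EntT]; rw [if_neg (by tauto)]
      simp [this]
    have lhs_eq : ((Jn ℓ n b) * (Jn ℓ n b) ^ m) (p, x) (q, y) = ∑ r : Fin n, H ↑↑r := by
      rw [Matrix.mul_apply, Fintype.sum_prod_type]
      refine Finset.sum_congr rfl fun r _ => Finset.sum_congr rfl fun z _ => ?_
      rw [ih r z]
      congr 1
      show Jn ℓ n b (p, x) (r, z) = e ↑↑p ↑↑r x z
      rw [he]
      simp only [Jn, EntT, Matrix.of_apply]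
      by_cases hb : |((p:ℕ):ℤ) - ((r:ℕ):ℤ)| ≤ 1
      · rw [if_pos hb, if_pos ⟨by positivity, by exact_mod_cast p.2, by positivity, by exact_mod_cast r.2, hb⟩]
      · rw [if_neg hb, if_neg (by tauto)]
        simp
    have rhs_eq : Phi ℓ (m+1) e ↑p ↑q x y = ∑ d ∈ ({-1,0,1} : Finset ℤ), H (↑↑p + d) := by
      simp only [Phi, Matrix.sum_apply, Matrix.mul_apply, hH]
    rw [lhs_eq, rhs_eq]
    -- both equal the sum over the intersection
    have h1 : ∑ r : Fin n, H ↑↑r = ∑ j ∈ Finset.image (fun r : Fin n => (↑↑r : ℤ)) Finset.univ, H j := by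
      rw [Finset.sum_image (by intro r _ s _ hrs; simp only at hrs; exact_mod_cast Fin.val_injective (by exact_mod_cast hrs))]
    have h2 : ∑ d ∈ ({-1,0,1} : Finset ℤ), H (↑↑p + d)
        = ∑ j ∈ Finset.image (fun d : ℤ => (↑↑p : ℤ) + d) ({-1,0,1} : Finset ℤ), H j := by
      rw [Finset.sum_image (by intro r _ s _ hrs; simp only at hrs; omega)]
    rw [h1, h2]
    set S := Finset.image (fun r : Fin n => (↑↑r : ℤ)) Finset.univ with hS
    set T := Finset.image (fun d : ℤ => (↑↑p : ℤ) + d) ({-1,0,1} : Finset ℤ) with hT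
    have hSmem : ∀ j : ℤ, j ∈ S ↔ 0 ≤ j ∧ j < n := by
      intro j
      rw [hS, Finset.mem_image]
      simp only [Finset.mem_univ, true_and]
      exact hmem j
    have hTmem : ∀ j : ℤ, j ∈ T ↔ |(↑↑p : ℤ) - j| ≤ 1 := by
      intro j
      rw [hT, Finset.mem_image]
      constructor
      · rintro ⟨d, hd, rfl⟩
        fin_cases hd <;> simp <;> omega
      · intro hj
        rw [abs_le] at hj
        refine ⟨j - ↑↑p, ?_, by ring⟩
        simp only [Finset.mem_insert, Finset.mem_singleton]
        omega
    rw [show ∑ j ∈ S, H j = ∑ j ∈ S ∩ T, H j from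
        (Finset.sum_subset (Finset.inter_subset_left) (fun j hjS hjn => by
          refine hzero2 j fun hc => hjn ?_
          exact Finset.mem_inter.mpr ⟨hjS, (hTmem j).mpr hc⟩)).symm,
      show ∑ j ∈ T, H j = ∑ j ∈ S ∩ T, H j from
        (Finset.sum_subset (Finset.inter_subset_right) (fun j hjT hjn => by
          refine hzero1 j fun hc => hjn ?_
          exact Finset.mem_inter.mpr ⟨(hSmem j).mpr hc, hjT⟩)).symm]

/-- trace of a power of `Jn` as a sum of block traces -/
theorem trace_formula (b : ℤ → ℤ → Matrix (Fin ℓ) (Fin ℓ) ℂ) (n k : ℕ) :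
    Matrix.trace ((Jn ℓ n b) ^ k)
      = ∑ p : Fin n, Matrix.trace (Phi ℓ k (EntT ℓ n b) ↑↑p ↑↑p) := by
  simp only [Matrix.trace, Matrix.diag]
  rw [Fintype.sum_prod_type]
  exact Finset.sum_congr rfl fun p _ => Finset.sum_congr rfl fun x _ => bridge b n k p p x x

/-- in the interior, the truncated and untruncated path sums agree -/
theorem phiInterior (b : ℤ → ℤ → Matrix (Fin ℓ) (Fin ℓ) ℂ) (n k : ℕ) (p : ℤ)
    (hp1 : (k : ℤ) ≤ p) (hp2 : p + k < n) :
    Phi ℓ k (EntT ℓ n b) p p = Phi ℓ k (EntA ℓ b) p p := by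
  have := Phi_locality k (EntT ℓ n b) (EntA ℓ b) p p (fun c c' hc hc' => by
    rw [abs_le] at hc hc'
    simp only [EntT, EntA]
    rw [if_congr (Iff.intro (fun h => h.2.2.2.2) (fun h => ⟨by omega, by omega, by omega, by omega, h⟩)) rfl rfl]) p
  simpa using this

/-- translation invariance of the Toeplitz path sum -/
theorem toeplitz_shift (γm γ0 γ1 : Matrix (Fin ℓ) (Fin ℓ) ℂ) (k : ℕ) (p : ℤ) :
    Phi ℓ k (EntA ℓ (toeplitzBlocks ℓ γm γ0 γ1)) p p
      = Phi ℓ k (EntA ℓ (toeplitzBlocks ℓ γm γ0 γ1)) 0 0 := by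
  have := Phi_locality k (EntA ℓ (toeplitzBlocks ℓ γm γ0 γ1)) (EntA ℓ (toeplitzBlocks ℓ γm γ0 γ1))
    p 0 (fun c c' _ _ => by
      simp only [EntA, toeplitzBlocks, zero_add]
      have hband : |p + c - (p + c')| = |c - c'| := by congr 1; ring
      rw [hband]
      rcases le_or_gt (|c - c'|) 1 with hb | hb
      · rw [if_pos hb, if_pos hb]
        split_ifs <;> first | rfl | omega
      · rw [if_neg (by omega), if_neg (by omega)]) p
  simpa using this

theorem entA_bound (C : ℝ) (hC : 0 ≤ C) (b : ℤ → ℤ → Matrix (Fin ℓ) (Fin ℓ) ℂ)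
    (hb : ∀ p q x y, ‖b p q x y‖ ≤ C) :
    ∀ p q x y, ‖EntA ℓ b p q x y‖ ≤ C := by
  intro p q x y
  simp only [EntA]
  split_ifs with h
  · exact hb p q x y
  · simpa using hC

theorem entT_bound (C : ℝ) (hC : 0 ≤ C) (n : ℕ) (b : ℤ → ℤ → Matrix (Fin ℓ) (Fin ℓ) ℂ)
    (hb : ∀ p q x y, ‖b p q x y‖ ≤ C) :
    ∀ p q x y, ‖EntT ℓ n b p q x y‖ ≤ C := by
  intro p q x y
  simp only [EntT]
  split_ifs with h
  · exact hb p q x y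
  · simpa using hC

theorem trace_bound (C : ℝ) (hC : 1 ≤ C) (k : ℕ)
    (e : ℤ → ℤ → Matrix (Fin ℓ) (Fin ℓ) ℂ)
    (he : ∀ p q x y, ‖e p q x y‖ ≤ C) (p q : ℤ) :
    ‖Matrix.trace (Phi ℓ k e p q)‖ ≤ ℓ * (3 * ℓ * C) ^ k := by
  simp only [Matrix.trace, Matrix.diag]
  calc ‖∑ x : Fin ℓ, Phi ℓ k e p q x x‖
      ≤ ∑ x : Fin ℓ, ‖Phi ℓ k e p q x x‖ := norm_sum_le _ _
    _ ≤ ∑ _x : Fin ℓ, (3 * ℓ * C) ^ k :=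
        Finset.sum_le_sum fun x _ => Phi_bound C hC k e he p q x x
    _ = ℓ * (3 * ℓ * C) ^ k := by
        rw [Finset.sum_const, Finset.card_univ, Fintype.card_fin, nsmul_eq_mul]

/-- boundary estimate -/
theorem boundary (C : ℝ) (hC : 1 ≤ C) (b : ℤ → ℤ → Matrix (Fin ℓ) (Fin ℓ) ℂ)
    (hb : ∀ p q x y, ‖b p q x y‖ ≤ C) (n k : ℕ) :
    ‖Matrix.trace ((Jn ℓ n b) ^ k)
        - ∑ p : Fin n, Matrix.trace (Phi ℓ k (EntA ℓ b) ↑↑p ↑↑p)‖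
      ≤ (2 * k + 2) * (2 * (ℓ * (3 * ℓ * C) ^ k)) := by
  rw [trace_formula, ← Finset.sum_sub_distrib]
  set D : ℝ := ℓ * (3 * ℓ * C) ^ k with hD
  have hD0 : 0 ≤ D := by positivity
  have hterm : ∀ p : Fin n, ‖
      Matrix.trace (Phi ℓ k (EntT ℓ n b) ↑↑p ↑↑p) - Matrix.trace (Phi ℓ k (EntA ℓ b) ↑↑p ↑↑p)‖
      ≤ 2 * D := by
    intro p
    calc ‖_‖ ≤ ‖Matrix.trace (Phi ℓ k (EntT ℓ n b) ↑↑p ↑↑p)‖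
          + ‖Matrix.trace (Phi ℓ k (EntA ℓ b) ↑↑p ↑↑p)‖ := by
          simpa using norm_sub_le (Matrix.trace (Phi ℓ k (EntT ℓ n b) ↑↑p ↑↑p)) (Matrix.trace (Phi ℓ k (EntA ℓ b) ↑↑p ↑↑p))
      _ ≤ D + D := add_le_add
          (trace_bound C hC k _ (entT_bound C (by linarith) n b hb) _ _)
          (trace_bound C hC k _ (entA_bound C (by linarith) b hb) _ _)
      _ = 2 * D := by ring
  have hvanish : ∀ p : Fin n, (k : ℤ) ≤ ↑↑p → (↑↑p : ℤ) + k < n →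
      Matrix.trace (Phi ℓ k (EntT ℓ n b) ↑↑p ↑↑p) - Matrix.trace (Phi ℓ k (EntA ℓ b) ↑↑p ↑↑p) = 0 := by
    intro p h1 h2
    rw [phiInterior b n k _ h1 h2, sub_self]
  set bad : Finset (Fin n) := Finset.univ.filter
    (fun p : Fin n => ↑p < k ∨ n ≤ ↑p + k + 1) with hbad
  have hcard : (bad.card : ℝ) ≤ 2 * k + 2 := by
    have h1 : bad ⊆ (Finset.univ.filter (fun p : Fin n => ↑p < k))
        ∪ (Finset.univ.filter (fun p : Fin n => n ≤ ↑p + k + 1)) := by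
      intro p hp
      rw [hbad, Finset.mem_filter] at hp
      rcases hp.2 with h | h
      · exact Finset.mem_union_left _ (Finset.mem_filter.mpr ⟨Finset.mem_univ _, h⟩)
      · exact Finset.mem_union_right _ (Finset.mem_filter.mpr ⟨Finset.mem_univ _, h⟩)
    have c1 : (Finset.univ.filter (fun p : Fin n => ↑p < k)).card ≤ k := by
      have : Finset.image (fun p : Fin n => (↑p : ℕ)) (Finset.univ.filter (fun p : Fin n => ↑p < k))
          ⊆ Finset.range k := by
        intro j hj
        rw [Finset.mem_image] at hj
        obtain ⟨p, hp, rfl⟩ := hj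
        exact Finset.mem_range.mpr (Finset.mem_filter.mp hp).2
      calc (Finset.univ.filter (fun p : Fin n => ↑p < k)).card
          = (Finset.image (fun p : Fin n => (↑p : ℕ)) _).card :=
            (Finset.card_image_of_injective _ Fin.val_injective).symm
        _ ≤ (Finset.range k).card := Finset.card_le_card this
        _ = k := Finset.card_range k
    have c2 : (Finset.univ.filter (fun p : Fin n => n ≤ ↑p + k + 1)).card ≤ k + 1 := by
      have : Finset.image (fun p : Fin n => (↑p : ℕ)) (Finset.univ.filter (fun p : Fin n => n ≤ ↑p + k + 1))
          ⊆ Finset.Ico (n - k - 1) n := by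
        intro j hj
        rw [Finset.mem_image] at hj
        obtain ⟨p, hp, rfl⟩ := hj
        have := (Finset.mem_filter.mp hp).2
        have := p.2
        exact Finset.mem_Ico.mpr ⟨by omega, by omega⟩
      calc (Finset.univ.filter (fun p : Fin n => n ≤ ↑p + k + 1)).card
          = (Finset.image (fun p : Fin n => (↑p : ℕ)) _).card :=
            (Finset.card_image_of_injective _ Fin.val_injective).symm
        _ ≤ (Finset.Ico (n - k - 1) n).card := Finset.card_le_card this
        _ = n - (n - k - 1) := Nat.card_Ico _ _
        _ ≤ k + 1 := by omega
    calc (bad.card : ℝ) ≤ ((Finset.univ.filter (fun p : Fin n => ↑p < k)).card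
          + (Finset.univ.filter (fun p : Fin n => n ≤ ↑p + k + 1)).card : ℕ) := by
          exact_mod_cast le_trans (Finset.card_le_card h1) (Finset.card_union_le _ _)
      _ ≤ ((k + (k+1) : ℕ) : ℝ) := by exact_mod_cast add_le_add c1 c2
      _ ≤ 2 * k + 2 := by push_cast; linarith
  calc ‖∑ p : Fin n, (Matrix.trace (Phi ℓ k (EntT ℓ n b) ↑↑p ↑↑p)
          - Matrix.trace (Phi ℓ k (EntA ℓ b) ↑↑p ↑↑p))‖
      ≤ ∑ p : Fin n, ‖Matrix.trace (Phi ℓ k (EntT ℓ n b) ↑↑p ↑↑p)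
          - Matrix.trace (Phi ℓ k (EntA ℓ b) ↑↑p ↑↑p)‖ := norm_sum_le _ _
    _ = ∑ p ∈ bad, ‖Matrix.trace (Phi ℓ k (EntT ℓ n b) ↑↑p ↑↑p)
          - Matrix.trace (Phi ℓ k (EntA ℓ b) ↑↑p ↑↑p)‖ := by
        refine (Finset.sum_subset (Finset.subset_univ _) (fun p _ hp => ?_)).symm
        rw [hbad, Finset.mem_filter] at hp
        push_neg at hp
        have hgood := hp (Finset.mem_univ p)
        have h1 : (k : ℤ) ≤ ↑↑p := by omega
        have h2 : (↑↑p : ℤ) + k < n := by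
          have := hgood.2
          omega
        rw [hvanish p h1 h2, norm_zero]
    _ ≤ ∑ _p ∈ bad, 2 * D := Finset.sum_le_sum fun p _ => hterm p
    _ = bad.card * (2 * D) := by rw [Finset.sum_const, nsmul_eq_mul]
    _ ≤ (2 * k + 2) * (2 * D) := by
        apply mul_le_mul_of_nonneg_right hcard (by linarith)

theorem step_meas (f : ℕ → ℂ) (N : ℕ) : Measurable (fun s : ℝ => f (⌊s * (N:ℝ)⌋.toNat)) := by
  have h1 : Measurable (fun s : ℝ => ⌊s * (N:ℝ)⌋) :=
    Int.measurable_floor.comp (measurable_id.mul_const _)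
  exact (measurable_from_top (f := fun z : ℤ => f z.toNat)).comp h1

theorem integrableOn_step (f : ℕ → ℂ) (N : ℕ) (D : ℝ) (hf : ∀ p, ‖f p‖ ≤ D)
    (A B : ℝ) : IntegrableOn (fun s : ℝ => f (⌊s * (N:ℝ)⌋.toNat)) (Set.Ico A B) volume := by
  refine Integrable.mono' (g := fun _ => D) ((integrableOn_const_iff).mpr (Or.inr measure_Ico_lt_top))
    ((step_meas f N).aestronglyMeasurable) ?_
  exact Eventually.of_forall fun s => hf _

theorem riemann_sum (f : ℕ → ℂ) (D : ℝ) (hf : ∀ p, ‖f p‖ ≤ D) (N : ℕ) (hN : 0 < N) :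
    ∀ n : ℕ, ∫ s in Set.Ico (0:ℝ) ((n:ℝ)/(N:ℝ)), f (⌊s * (N:ℝ)⌋.toNat)
      = ((N:ℝ))⁻¹ • ∑ p ∈ Finset.range n, f p := by
  have hNR : (0:ℝ) < N := by exact_mod_cast hN
  intro n
  induction n with
  | zero => simp
  | succ n ih =>
    have hmono : ((n:ℝ))/(N:ℝ) ≤ ((n:ℝ)+1)/(N:ℝ) := by
      gcongr
      linarith
    have hsplit : Set.Ico (0:ℝ) ((n:ℝ)/(N:ℝ)) ∪ Set.Ico ((n:ℝ)/(N:ℝ)) (((n:ℝ)+1)/(N:ℝ))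
        = Set.Ico (0:ℝ) (((n:ℝ)+1)/(N:ℝ)) :=
      Set.Ico_union_Ico_eq_Ico (by positivity) hmono
    have hcast : (((n+1:ℕ)):ℝ)/(N:ℝ) = ((n:ℝ)+1)/(N:ℝ) := by push_cast; ring
    rw [hcast, ← hsplit, setIntegral_union (Set.Ico_disjoint_Ico_same)
      measurableSet_Ico (integrableOn_step f N D hf _ _) (integrableOn_step f N D hf _ _), ih]
    have hconst : ∫ s in Set.Ico ((n:ℝ)/(N:ℝ)) (((n:ℝ)+1)/(N:ℝ)), f (⌊s * (N:ℝ)⌋.toNat)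
        = ((N:ℝ))⁻¹ • f n := by
      rw [setIntegral_congr_fun measurableSet_Ico (g := fun _ => f n) (fun s hs => by
        obtain ⟨h1, h2⟩ := hs
        have hfloor : ⌊s * (N:ℝ)⌋ = (n : ℤ) := by
          rw [Int.floor_eq_iff]
          constructor
          · push_cast
            calc (n:ℝ) = ((n:ℝ)/(N:ℝ)) * N := by field_simp
              _ ≤ s * N := by gcongr
          · push_cast
            calc s * (N:ℝ) < (((n:ℝ)+1)/(N:ℝ)) * N := by gcongr
              _ = (n:ℝ) + 1 := by field_simp
        simp [hfloor])]
      rw [setIntegral_const]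
      congr 1
      rw [Real.volume_real_Ico_of_le hmono]
      field_simp
      ring
    rw [hconst, Finset.sum_range_succ, smul_add]

theorem tail_bound (f : ℝ → ℂ) (D : ℝ) (hD : 0 ≤ D) (hf : ∀ s, ‖f s‖ ≤ D)
    (hmeas : ∀ A B : ℝ, IntegrableOn f (Set.Ico A B) volume)
    (b tt : ℝ) (hb : 0 ≤ b) (htt : 0 ≤ tt) :
    ‖(∫ s in Set.Ico (0:ℝ) b, f s) - ∫ s in Set.Ico (0:ℝ) tt, f s‖ ≤ D * |b - tt| := by
  rcases le_total b tt with h | h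
  · have hsplit : Set.Ico (0:ℝ) b ∪ Set.Ico b tt = Set.Ico (0:ℝ) tt :=
      Set.Ico_union_Ico_eq_Ico hb h
    rw [← hsplit, setIntegral_union (Set.Ico_disjoint_Ico_same)
      measurableSet_Ico (hmeas _ _) (hmeas _ _)]
    rw [show (∫ s in Set.Ico (0:ℝ) b, f s) - ((∫ s in Set.Ico (0:ℝ) b, f s) + ∫ s in Set.Ico b tt, f s)
      = -(∫ s in Set.Ico b tt, f s) by ring, norm_neg]
    calc ‖∫ s in Set.Ico b tt, f s‖ ≤ D * (volume (Set.Ico b tt)).toReal :=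
        norm_setIntegral_le_of_norm_le_const measure_Ico_lt_top (fun x _ => hf x)
      _ ≤ D * |b - tt| := by
        rw [Real.volume_Ico]
        apply mul_le_mul_of_nonneg_left _ hD
        rw [ENNReal.toReal_ofReal (by linarith), abs_sub_comm, abs_of_nonneg (by linarith)]
  · have hsplit : Set.Ico (0:ℝ) tt ∪ Set.Ico tt b = Set.Ico (0:ℝ) b :=
      Set.Ico_union_Ico_eq_Ico htt h
    rw [← hsplit, setIntegral_union (Set.Ico_disjoint_Ico_same)
      measurableSet_Ico (hmeas _ _) (hmeas _ _)]
    rw [show ((∫ s in Set.Ico (0:ℝ) tt, f s) + ∫ s in Set.Ico tt b, f s) - (∫ s in Set.Ico (0:ℝ) tt, f s)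
      = (∫ s in Set.Ico tt b, f s) by ring]
    calc ‖∫ s in Set.Ico tt b, f s‖ ≤ D * (volume (Set.Ico tt b)).toReal :=
        norm_setIntegral_le_of_norm_le_const measure_Ico_lt_top (fun x _ => hf x)
      _ ≤ D * |b - tt| := by
        rw [Real.volume_Ico]
        apply mul_le_mul_of_nonneg_left _ hD
        rw [ENNReal.toReal_ofReal (by linarith), abs_of_nonneg (by linarith)]

theorem floor_aux (s : ℝ) (hs : 0 < s) (N : ℕ → ℕ) (hN : Tendsto N atTop atTop) :
    Tendsto (fun j => (⌊s * (N j : ℝ)⌋).toNat) atTop atTop ∧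
    Tendsto (fun j => (((⌊s * (N j : ℝ)⌋).toNat : ℝ)) / (N j : ℝ)) atTop (nhds s) := by
  have hNR : Tendsto (fun j => (N j : ℝ)) atTop atTop :=
    tendsto_natCast_atTop_atTop.comp hN
  have hsN : Tendsto (fun j => s * (N j : ℝ)) atTop atTop :=
    hNR.const_mul_atTop hs
  have hpos : ∀ j, (0:ℤ) ≤ ⌊s * (N j : ℝ)⌋ := fun j =>
    Int.floor_nonneg.mpr (by positivity)
  have hcast : ∀ j, (((⌊s * (N j : ℝ)⌋).toNat : ℝ)) = (⌊s * (N j : ℝ)⌋ : ℝ) := by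
    intro j
    exact_mod_cast congrArg (Int.cast : ℤ → ℝ) (Int.toNat_of_nonneg (hpos j))
  have hev : ∀ᶠ j in atTop, 1 ≤ N j := hN.eventually_ge_atTop 1
  constructor
  · rw [tendsto_atTop_atTop]
    intro b
    obtain ⟨i, hi⟩ := eventually_atTop.mp (hsN.eventually_ge_atTop ((b:ℝ)+1))
    refine ⟨i, fun j hj => ?_⟩
    have h1 : ((b:ℤ)+1 : ℤ) ≤ ⌊s * (N j : ℝ)⌋ := Int.le_floor.mpr (by push_cast; linarith [hi j hj])
    omega
  · have hlow : Tendsto (fun j => s - ((N j : ℝ))⁻¹) atTop (nhds s) := by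
      have h2 := tendsto_inv_atTop_zero.comp hNR
      simpa using tendsto_const_nhds.sub h2
    refine tendsto_of_tendsto_of_tendsto_of_le_of_le' hlow tendsto_const_nhds ?_ ?_
    · filter_upwards [hev] with j hj
      have hNj : (0:ℝ) < (N j : ℝ) := by exact_mod_cast hj
      rw [hcast j, le_div_iff₀ hNj]
      have heq : (s - ((N j : ℝ))⁻¹) * (N j : ℝ) = s * (N j : ℝ) - 1 := by field_simp
      linarith [Int.sub_one_lt_floor (s * (N j : ℝ))]
    · filter_upwards [hev] with j hj
      have hNj : (0:ℝ) < (N j : ℝ) := by exact_mod_cast hj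
      rw [hcast j, div_le_iff₀ hNj]
      exact Int.floor_le _


theorem tendsto_matrix_trace {A : Matrix (Fin ℓ) (Fin ℓ) ℂ} {F : ℕ → Matrix (Fin ℓ) (Fin ℓ) ℂ}
    (h : Tendsto F atTop (nhds A)) :
    Tendsto (fun j => Matrix.trace (F j)) atTop (nhds (Matrix.trace A)) := by
  simp only [Matrix.trace, Matrix.diag]
  exact tendsto_finset_sum _ fun x _ => tendsto_pi_nhds.mp (tendsto_pi_nhds.mp h x) x

theorem entry_bd_of_tendsto (C : ℝ) (A : Matrix (Fin ℓ) (Fin ℓ) ℂ)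
    (F : ℕ → Matrix (Fin ℓ) (Fin ℓ) ℂ) (hF : Tendsto F atTop (nhds A))
    (hbd : ∀ j x y, ‖F j x y‖ ≤ C) : ∀ x y, ‖A x y‖ ≤ C := by
  intro x y
  have hxy : Tendsto (fun j => F j x y) atTop (nhds (A x y)) :=
    tendsto_pi_nhds.mp (tendsto_pi_nhds.mp hF x) y
  have habs : Tendsto (fun j => ‖F j x y‖) atTop (nhds (‖A x y‖)) :=
    (continuous_norm.tendsto _).comp hxy
  exact le_of_tendsto habs (Eventually.of_forall fun j => hbd j x y)

theorem inv_nat_mul_const_tendsto (K : ℝ) {n : ℕ → ℕ} (hn : Tendsto n atTop atTop) :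
    Tendsto (fun j => ((n j : ℝ))⁻¹ * K) atTop (nhds 0) := by
  have h1 : Tendsto (fun j => ((n j : ℝ))⁻¹) atTop (nhds 0) :=
    tendsto_inv_atTop_zero.comp (tendsto_natCast_atTop_atTop.comp hn)
  simpa using h1.mul_const K

set_option maxHeartbeats 2000000 in
/-- Method of moments for variable block tridiagonal (locally Toeplitz) matrices. -/
theorem stmt11 (ℓ : ℕ) (hℓ : 0 < ℓ) (t : ℝ) (ht : 0 < t)
    (γm γ0 γ1 : ℝ → Matrix (Fin ℓ) (Fin ℓ) ℂ)
    (hγm : ∀ x y, Measurable fun s => γm s x y)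
    (hγ0 : ∀ x y, Measurable fun s => γ0 s x y)
    (hγ1 : ∀ x y, Measurable fun s => γ1 s x y)
    (a : ℕ → ℤ → ℤ → Matrix (Fin ℓ) (Fin ℓ) ℂ)
    (hbd : ∃ C : ℝ, ∀ (Nn : ℕ) (j k : ℤ) (x y : Fin ℓ), ‖a Nn j k x y‖ ≤ C)
    (hlimm : ∀ᵐ s ∂(volume.restrict (Set.Icc (0 : ℝ) t)),
      ∀ n N : ℕ → ℕ, Tendsto n atTop atTop → Tendsto N atTop atTop →
        Tendsto (fun j => (n j : ℝ) / (N j : ℝ)) atTop (nhds s) →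
        Tendsto (fun j => a (N j) ((n j : ℤ) - 1) ((n j : ℤ))) atTop (nhds (γm s)))
    (hlim0 : ∀ᵐ s ∂(volume.restrict (Set.Icc (0 : ℝ) t)),
      ∀ n N : ℕ → ℕ, Tendsto n atTop atTop → Tendsto N atTop atTop →
        Tendsto (fun j => (n j : ℝ) / (N j : ℝ)) atTop (nhds s) →
        Tendsto (fun j => a (N j) ((n j : ℤ)) ((n j : ℤ))) atTop (nhds (γ0 s)))
    (hlim1 : ∀ᵐ s ∂(volume.restrict (Set.Icc (0 : ℝ) t)),
      ∀ n N : ℕ → ℕ, Tendsto n atTop atTop → Tendsto N atTop atTop →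
        Tendsto (fun j => (n j : ℝ) / (N j : ℝ)) atTop (nhds s) →
        Tendsto (fun j => a (N j) ((n j : ℤ) + 1) ((n j : ℤ))) atTop (nhds (γ1 s)))
    (ν : ℝ → Measure ℂ)
    (hν : ∀ᵐ s ∂(volume.restrict (Set.Icc (0 : ℝ) t)),
      IsFiniteMeasure (ν s) ∧ (∃ K : Set ℂ, IsCompact K ∧ ν s Kᶜ = 0) ∧
      ∀ k : ℕ, Tendsto
        (fun n : ℕ => ((n : ℂ))⁻¹ *
          Matrix.trace ((Jn ℓ n (toeplitzBlocks ℓ (γm s) (γ0 s) (γ1 s))) ^ k))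
        atTop (nhds (∫ z, z ^ k ∂(ν s)))) :
    ∀ k : ℕ, ∀ n N : ℕ → ℕ, Tendsto n atTop atTop → Tendsto N atTop atTop →
      Tendsto (fun j => (n j : ℝ) / (N j : ℝ)) atTop (nhds t) →
      Tendsto (fun j => ((n j : ℂ))⁻¹ * Matrix.trace ((Jn ℓ (n j) (a (N j))) ^ k))
        atTop (nhds ((t : ℂ)⁻¹ * ∫ s in (0 : ℝ)..t, ∫ z, z ^ k ∂(ν s))) := by
  obtain ⟨C0, hC0⟩ := hbd
  intro k n N hn hN hnN
  set C : ℝ := max C0 1 with hCdef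
  have hC1 : (1:ℝ) ≤ C := le_max_right _ _
  have hCnn : (0:ℝ) ≤ C := by linarith
  have ha : ∀ (M : ℕ) (p q : ℤ) (x y : Fin ℓ), ‖a M p q x y‖ ≤ C :=
    fun M p q x y => le_trans (hC0 M p q x y) (le_max_left _ _)
  set D : ℝ := ℓ * (3 * ℓ * C) ^ k with hDdef
  have hD0 : (0:ℝ) ≤ D := by positivity
  set g : ℕ → ℕ → ℂ := fun M p => Matrix.trace (Phi ℓ k (EntA ℓ (a M)) (p:ℤ) (p:ℤ)) with hg
  set G : ℝ → ℂ := fun s =>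
    Matrix.trace (Phi ℓ k (EntA ℓ (toeplitzBlocks ℓ (γm s) (γ0 s) (γ1 s))) 0 0) with hGdef
  have hgbd : ∀ M p, ‖g M p‖ ≤ D := fun M p => by
    rw [hg]
    exact trace_bound C hC1 k _ (entA_bound C hCnn _ (ha M)) _ _
  -- pointwise (a.e.) facts
  have hae : ∀ᵐ s ∂(volume.restrict (Set.Icc (0 : ℝ) t)), 0 < s →
      (G s = ∫ z, z ^ k ∂(ν s)) ∧
      Tendsto (fun j => g (N j) ((⌊s * (N j : ℝ)⌋).toNat)) atTop (nhds (G s)) := by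
    filter_upwards [hlimm, hlim0, hlim1, hν] with s Hm H0 H1 Hν
    intro hs
    set bs : ℤ → ℤ → Matrix (Fin ℓ) (Fin ℓ) ℂ := toeplitzBlocks ℓ (γm s) (γ0 s) (γ1 s) with hbs
    -- entry bounds for the limit blocks
    obtain ⟨hq1, hq2⟩ := floor_aux s hs (fun j => j + 1)
      (tendsto_atTop_atTop_of_monotone (fun i j hij => by omega) (fun b => ⟨b, by omega⟩))
    have hNq : Tendsto (fun j : ℕ => j + 1) atTop atTop :=
      tendsto_atTop_atTop_of_monotone (fun i j hij => by omega) (fun b => ⟨b, by omega⟩)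
    have hbm : ∀ x y, ‖γm s x y‖ ≤ C :=
      entry_bd_of_tendsto C _ _ (Hm _ _ hq1 hNq hq2) (fun j x y => ha _ _ _ x y)
    have hb0 : ∀ x y, ‖γ0 s x y‖ ≤ C :=
      entry_bd_of_tendsto C _ _ (H0 _ _ hq1 hNq hq2) (fun j x y => ha _ _ _ x y)
    have hb1 : ∀ x y, ‖γ1 s x y‖ ≤ C :=
      entry_bd_of_tendsto C _ _ (H1 _ _ hq1 hNq hq2) (fun j x y => ha _ _ _ x y)
    have hbsbd : ∀ p q x y, ‖bs p q x y‖ ≤ C := by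
      intro p q x y
      rw [hbs]
      simp only [toeplitzBlocks]
      split_ifs
      · exact hbm x y
      · exact hb0 x y
      · exact hb1 x y
      · simpa using hCnn
    -- (i) the Toeplitz limit identifies G s with the k-th moment
    have hGs : G s = ∫ z, z ^ k ∂(ν s) := by
      refine tendsto_nhds_unique ?_ (Hν.2.2 k)
      -- show the normalized Toeplitz traces tend to G s
      have hconst : ∀ m : ℕ, (∑ p : Fin m, Matrix.trace (Phi ℓ k (EntA ℓ bs) ↑↑p ↑↑p))
          = (m : ℂ) * G s := by
        intro m
        rw [Finset.sum_congr rfl (fun p _ => by rw [toeplitz_shift]),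
          Finset.sum_const, Finset.card_univ, Fintype.card_fin, nsmul_eq_mul]
      have hsmall : Tendsto (fun m : ℕ =>
          ((m:ℂ))⁻¹ * (Matrix.trace ((Jn ℓ m bs) ^ k) - (m : ℂ) * G s)) atTop (nhds 0) := by
        refine squeeze_zero_norm (fun m => ?_)
          (inv_nat_mul_const_tendsto ((2 * k + 2) * (2 * D)) tendsto_id)
        rw [norm_mul, norm_inv, Complex.norm_natCast]
        refine mul_le_mul_of_nonneg_left ?_ (by positivity)
        rw [← hconst m]
        exact boundary C hC1 bs hbsbd m k
      have hev : ∀ᶠ m : ℕ in atTop, ((m:ℂ))⁻¹ * (Matrix.trace ((Jn ℓ m bs) ^ k) - (m : ℂ) * G s) + G s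
          = ((m:ℂ))⁻¹ * Matrix.trace ((Jn ℓ m bs) ^ k) := by
        filter_upwards [eventually_ge_atTop 1] with m hm
        have hm0 : (m:ℂ) ≠ 0 := by
          simp only [ne_eq, Nat.cast_eq_zero]
          omega
        field_simp
        ring
      have := hsmall.add (tendsto_const_nhds (x := G s))
      rw [zero_add] at this
      exact Tendsto.congr' hev this
    refine ⟨hGs, ?_⟩
    -- (ii) convergence of the local block traces
    obtain ⟨hp1, hp2⟩ := floor_aux s hs N hN
    set P : ℕ → ℤ := fun j => ((⌊s * (N j : ℝ)⌋).toNat : ℤ) with hP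
    have hloc : ∀ j, g (N j) ((⌊s * (N j : ℝ)⌋).toNat)
        = Matrix.trace (Phi ℓ k (fun u v => EntA ℓ (a (N j)) (P j + u) (P j + v)) 0 0) := by
      intro j
      have hl := Phi_locality k (EntA ℓ (a (N j)))
        (fun u v => EntA ℓ (a (N j)) (P j + u) (P j + v)) (P j) 0
        (fun c c' _ _ => by simp) (P j)
      rw [hg]
      simp only []
      rw [show (((⌊s * (N j : ℝ)⌋).toNat : ℤ)) = P j from rfl] at *
      rw [hl]
      norm_num
    have hPhiT : Tendsto (fun j =>
        Phi ℓ k (fun u v => EntA ℓ (a (N j)) (P j + u) (P j + v)) 0 0) atTop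
        (nhds (Phi ℓ k (EntA ℓ bs) 0 0)) := by
      refine Phi_tendsto k _ _ 0 0 (fun c c' hc hc' => ?_)
      simp only [zero_add]
      rw [abs_le] at hc hc'
      by_cases hband : |c - c'| ≤ 1
      · -- the entries converge to the Toeplitz blocks
        have hEj : ∀ j, EntA ℓ (a (N j)) (P j + c) (P j + c') = a (N j) (P j + c) (P j + c') := by
          intro j
          simp only [EntA]
          rw [if_pos (by rw [show P j + c - (P j + c') = c - c' by ring]; exact hband)]
        have hEb : EntA ℓ bs c c' = bs c c' := by
          simp only [EntA]
          rw [if_pos hband]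
        rw [hEb]
        refine Tendsto.congr (fun j => (hEj j).symm) ?_
        -- the auxiliary index sequence
        set n' : ℕ → ℕ := fun j => (P j + c').toNat with hn'
        have hPat : Tendsto (fun j => (⌊s * (N j : ℝ)⌋).toNat) atTop atTop := hp1
        have hevP : ∀ᶠ j in atTop, (n' j : ℤ) = P j + c' := by
          filter_upwards [hPat.eventually_ge_atTop k.succ] with j hj
          have h5 : ((k:ℤ)+1) ≤ P j := by
            have h6 : ((k.succ : ℕ) : ℤ) ≤ ((⌊s * (N j : ℝ)⌋).toNat : ℤ) := by exact_mod_cast hj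
            simp only [hP]
            push_cast at h6 ⊢
            omega
          simp only [hn']
          rw [abs_le] at hband
          omega
        have hn'at : Tendsto n' atTop atTop := by
          rw [tendsto_atTop_atTop]
          intro b
          obtain ⟨i, hi⟩ := eventually_atTop.mp (hPat.eventually_ge_atTop (b + k + 1))
          refine ⟨i, fun j hj => ?_⟩
          have h5 : ((b:ℤ) + k + 1) ≤ P j := by
            have h6 : (((b + k + 1 : ℕ)) : ℤ) ≤ ((⌊s * (N j : ℝ)⌋).toNat : ℤ) := by
              exact_mod_cast hi j hj
            simp only [hP]
            push_cast at h6 ⊢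
            omega
          simp only [hn']
          omega
        have hratio : Tendsto (fun j => (n' j : ℝ) / (N j : ℝ)) atTop (nhds s) := by
          have hc'N : Tendsto (fun j => ((c' : ℝ)) / (N j : ℝ)) atTop (nhds 0) :=
            Tendsto.div_atTop tendsto_const_nhds (tendsto_natCast_atTop_atTop.comp hN)
          have hsum := hp2.add hc'N
          rw [add_zero] at hsum
          refine Tendsto.congr' ?_ hsum
          filter_upwards [hevP] with j hj
          have : (n' j : ℝ) = ((⌊s * (N j : ℝ)⌋).toNat : ℝ) + (c' : ℝ) := by
            have := congrArg (fun z : ℤ => (z : ℝ)) hj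
            push_cast at this ⊢
            rw [this]
            rw [hP]
            push_cast
            ring
          rw [← add_div, this]
        -- select the correct limit hypothesis
        have hcc : c = c' - 1 ∨ c = c' ∨ c = c' + 1 := by
          rw [abs_le] at hband
          omega
        rcases hcc with hcc | hcc | hcc
        · have hlim := Hm n' N hn'at hN hratio
          have hval : bs c c' = γm s := by
            rw [hbs]; simp only [toeplitzBlocks]
            rw [if_pos (by omega)]
          rw [hval]
          refine Tendsto.congr' ?_ hlim
          filter_upwards [hevP] with j hj
          rw [hj]
          exact congrArg (fun z => a (N j) z (P j + c')) (by omega)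
        · have hlim := H0 n' N hn'at hN hratio
          have hval : bs c c' = γ0 s := by
            rw [hbs]; simp only [toeplitzBlocks]
            rw [if_neg (by omega), if_pos hcc]
          rw [hval]
          refine Tendsto.congr' ?_ hlim
          filter_upwards [hevP] with j hj
          rw [hj]
          exact congrArg (fun z => a (N j) z (P j + c')) (by omega)
        · have hlim := H1 n' N hn'at hN hratio
          have hval : bs c c' = γ1 s := by
            rw [hbs]; simp only [toeplitzBlocks]
            rw [if_neg (by omega), if_neg (by omega), if_pos (by omega)]
          rw [hval]
          refine Tendsto.congr' ?_ hlim
          filter_upwards [hevP] with j hj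
          rw [hj]
          exact congrArg (fun z => a (N j) z (P j + c')) (by omega)
      · -- out of band: everything is zero
        have hEj : ∀ j, EntA ℓ (a (N j)) (P j + c) (P j + c') = 0 := by
          intro j
          simp only [EntA]
          rw [if_neg (by rw [show P j + c - (P j + c') = c - c' by ring]; exact hband)]
        have hEb : EntA ℓ bs c c' = 0 := by
          simp only [EntA]
          rw [if_neg hband]
        rw [hEb]
        exact Tendsto.congr (fun j => (hEj j).symm) tendsto_const_nhds
    refine Tendsto.congr (fun j => (hloc j).symm) ?_
    exact tendsto_matrix_trace hPhiT
  -- the step functions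
  set φ : ℕ → ℝ → ℂ := fun j s => g (N j) ((⌊s * (N j : ℝ)⌋).toNat) with hφ
  have hφbd : ∀ j s, ‖φ j s‖ ≤ D := fun j s => hgbd _ _
  -- dominated convergence on [0, t)
  have hIcoae : ∀ᵐ s ∂(volume.restrict (Set.Ico (0:ℝ) t)),
      Tendsto (fun j => φ j s) atTop (nhds (G s)) := by
    have h1 := ae_restrict_of_ae_restrict_of_subset Set.Ico_subset_Icc_self hae
    have h2 : ∀ᵐ s ∂(volume.restrict (Set.Ico (0:ℝ) t)), s ∈ Set.Ico (0:ℝ) t :=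
      ae_restrict_mem measurableSet_Ico
    have h3 : ∀ᵐ s ∂(volume.restrict (Set.Ico (0:ℝ) t)), s ≠ 0 := by
      refine ae_restrict_of_ae ?_
      rw [ae_iff]
      have : {s : ℝ | ¬ s ≠ 0} = {0} := by ext s; simp
      rw [this]
      exact Real.volume_singleton
    filter_upwards [h1, h2, h3] with s hs1 hs2 hs3
    exact (hs1 (lt_of_le_of_ne hs2.1 (Ne.symm hs3))).2
  have hDCT : Tendsto (fun j => ∫ s in Set.Ico (0:ℝ) t, φ j s) atTop
      (nhds (∫ s in Set.Ico (0:ℝ) t, G s)) := by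
    refine tendsto_integral_of_dominated_convergence (fun _ => D)
      (fun j => (step_meas (g (N j)) (N j)).aestronglyMeasurable)
      ((integrableOn_const_iff).mpr (Or.inr measure_Ico_lt_top))
      (fun j => Eventually.of_forall fun s => hφbd j s) hIcoae
  set L : ℂ := ∫ s in Set.Ico (0:ℝ) t, G s with hL
  set b : ℕ → ℝ := fun j => (n j : ℝ) / (N j : ℝ) with hbdef
  have hIj : Tendsto (fun j => ∫ s in Set.Ico (0:ℝ) (b j), φ j s) atTop (nhds L) := by
    have hdiff : Tendsto (fun j =>
        (∫ s in Set.Ico (0:ℝ) (b j), φ j s) - ∫ s in Set.Ico (0:ℝ) t, φ j s) atTop (nhds 0) := by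
      refine squeeze_zero_norm (fun j => tail_bound (φ j) D hD0 (fun s => hφbd j s)
        (fun A B => integrableOn_step (g (N j)) (N j) D (fun p => hgbd (N j) p) A B) (b j) t (by positivity) ht.le) ?_
      have habs : Tendsto (fun j => D * |b j - t|) atTop (nhds (D * |t - t|)) := by
        refine Tendsto.const_mul D ?_
        exact (continuous_abs.tendsto _).comp ((hnN.sub_const t))
      simpa using habs
    have := hdiff.add hDCT
    rw [zero_add] at this
    refine Tendsto.congr (fun j => ?_) this
    ring
  -- Riemann sum identity
  have hRiem : ∀ᶠ j in atTop, ((((N j : ℝ)) / ((n j : ℝ)) : ℝ) : ℂ) * (∫ s in Set.Ico (0:ℝ) (b j), φ j s)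
      = ((n j : ℂ))⁻¹ * ∑ p ∈ Finset.range (n j), g (N j) p := by
    filter_upwards [hN.eventually_ge_atTop 1, hn.eventually_ge_atTop 1] with j hNj hnj
    rw [hbdef]
    simp only []
    rw [riemann_sum (g (N j)) D (fun p => hgbd _ _) (N j) hNj (n j)]
    rw [Complex.real_smul]
    have hn0 : ((n j : ℂ)) ≠ 0 := by simp only [ne_eq, Nat.cast_eq_zero]; omega
    have hN0 : ((N j : ℂ)) ≠ 0 := by simp only [ne_eq, Nat.cast_eq_zero]; omega
    push_cast
    field_simp
  have hmain2 : Tendsto (fun j => ((n j : ℂ))⁻¹ * ∑ p ∈ Finset.range (n j), g (N j) p)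
      atTop (nhds ((t:ℂ)⁻¹ * L)) := by
    have hcoef : Tendsto (fun j => ((((N j : ℝ)) / ((n j : ℝ)) : ℝ) : ℂ)) atTop
        (nhds ((t⁻¹ : ℝ) : ℂ)) := by
      have h1 : Tendsto (fun j => (N j : ℝ) / (n j : ℝ)) atTop (nhds t⁻¹) := by
        have h2 := hnN.inv₀ (ne_of_gt ht)
        refine h2.congr fun j => ?_
        rw [← inv_div]
      exact (Complex.continuous_ofReal.tendsto _).comp h1
    have := hcoef.mul hIj
    rw [show ((t⁻¹ : ℝ) : ℂ) = (t:ℂ)⁻¹ from Complex.ofReal_inv t] at this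
    exact Tendsto.congr' hRiem this
  -- boundary piece
  have hbd2 : Tendsto (fun j => ((n j : ℂ))⁻¹ *
      (Matrix.trace ((Jn ℓ (n j) (a (N j))) ^ k) - ∑ p ∈ Finset.range (n j), g (N j) p))
      atTop (nhds 0) := by
    refine squeeze_zero_norm (fun j => ?_) (inv_nat_mul_const_tendsto ((2*k+2)*(2*D)) hn)
    rw [norm_mul, norm_inv, Complex.norm_natCast]
    refine mul_le_mul_of_nonneg_left ?_ (by positivity)
    have hsumeq : (∑ p ∈ Finset.range (n j), g (N j) p)
        = ∑ p : Fin (n j), Matrix.trace (Phi ℓ k (EntA ℓ (a (N j))) ↑↑p ↑↑p) := by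
      rw [Fin.sum_univ_eq_sum_range (fun p => Matrix.trace (Phi ℓ k (EntA ℓ (a (N j))) ↑p ↑p))]
    rw [hsumeq]
    exact boundary C hC1 (a (N j)) (ha (N j)) (n j) k
  -- identify the limit value
  have hval : (∫ s in (0:ℝ)..t, ∫ z, z ^ k ∂(ν s)) = L := by
    rw [intervalIntegral.integral_of_le ht.le]
    have hae2 : (fun s => ∫ z, z ^ k ∂(ν s)) =ᵐ[volume.restrict (Set.Ioc (0:ℝ) t)] G := by
      have h1 := ae_restrict_of_ae_restrict_of_subset Set.Ioc_subset_Icc_self hae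
      have h2 : ∀ᵐ s ∂(volume.restrict (Set.Ioc (0:ℝ) t)), s ∈ Set.Ioc (0:ℝ) t :=
        ae_restrict_mem measurableSet_Ioc
      filter_upwards [h1, h2] with s hs1 hs2
      exact ((hs1 hs2.1).1).symm
    rw [integral_congr_ae hae2, hL, integral_Ioc_eq_integral_Ioo,
      ← MeasureTheory.integral_Ico_eq_integral_Ioo]
  rw [hval]
  have hfinal := hbd2.add hmain2
  rw [zero_add] at hfinal
  refine Tendsto.congr (fun j => ?_) hfinal
  ring


end
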